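/- Let (X,⪯) be a finite partially ordered set, f : X → ℝ, k ≥ 1 an integer, and k' ≥ 3k an integer. Let C be a finite collection of k'-alternating chains for f that are pairwise disjoint as subsets of X. Then for every k-monotone function g : X → ℝ, d(f,g) ≥ |⋃_{C∈C} C| / (3·|X|). -/

import Mathlib

open Finset

def AltChain {X : Type*} [Preorder X] (f : X → ℝ) {m : ℕ} (x : Fin m → X) : Prop :=
  StrictMono x ∧ ∀ i : Fin m, ∀ h : (i : ℕ) + 1 < m,
    (Even (i : ℕ) → f (x ⟨(i : ℕ) + 1, h⟩) < f (x i)) ∧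
    (Odd (i : ℕ) → f (x i) < f (x ⟨(i : ℕ) + 1, h⟩))

def KMonotone {X : Type*} [Preorder X] (k : ℕ) (f : X → ℝ) : Prop :=
  ¬ ∃ x : Fin (k + 1) → X, AltChain f x

section AltL
variable {X : Type*} [Preorder X]

inductive Alt (g : X → ℝ) : Bool → List X → Prop
  | nil (b) : Alt g b []
  | single (b x) : Alt g b [x]
  | down {x y : X} {l : List X} : x < y → g y < g x → Alt g true (y :: l) →
      Alt g false (x :: y :: l)
  | up {x y : X} {l : List X} : x < y → g x < g y → Alt g false (y :: l) →
      Alt g true (x :: y :: l)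

theorem Alt.tail {g : X → ℝ} {b : Bool} {x : X} {l : List X} (h : Alt g b (x :: l)) :
    Alt g (!b) l := by
  cases h with
  | single => exact Alt.nil _
  | down _ _ h3 => exact h3
  | up _ _ h3 => exact h3

theorem Alt.pairwise {g : X → ℝ} {b : Bool} {l : List X} (h : Alt g b l) :
    l.Pairwise (· < ·) := by
  induction h with
  | nil => simp
  | single => simp
  | down h1 _ _ ih =>
    refine List.pairwise_cons.2 ⟨?_, ih⟩
    intro z hz
    rcases List.mem_cons.1 hz with h | h
    · subst h; exact h1
    · exact lt_trans h1 ((List.pairwise_cons.1 ih).1 z h)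
  | up h1 _ _ ih =>
    refine List.pairwise_cons.2 ⟨?_, ih⟩
    intro z hz
    rcases List.mem_cons.1 hz with h | h
    · subst h; exact h1
    · exact lt_trans h1 ((List.pairwise_cons.1 ih).1 z h)

theorem Alt.remove {g : X → ℝ} : ∀ (l : List X) (b : Bool), Alt g b l → ∀ x ∈ l,
    ∃ l', l'.Sublist l ∧ x ∉ l' ∧ Alt g b l' ∧ l.length ≤ l'.length + 2 ∧
      (l.head? = some x ∨ l' = [] ∨ ∃ h h', l.head? = some h ∧ l'.head? = some h' ∧
        (if b then g h' ≤ g h else g h ≤ g h')) := by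
  intro l
  induction l with
  | nil => intro b _ x hx; simp at hx
  | cons a t ih =>
    intro b hl x hx
    have hpw := hl.pairwise
    by_cases hxa : x = a
    · subst hxa
      match t with
      | [] =>
        exact ⟨[], by simp, by simp, Alt.nil _, by simp, Or.inl rfl⟩
      | c :: t2 =>
        refine ⟨t2, ((List.sublist_cons_self c t2).cons _), ?_, by simpa using hl.tail.tail,
          by simp, Or.inl rfl⟩
        intro hmem
        exact lt_irrefl x (List.rel_of_pairwise_cons hpw (List.mem_cons_of_mem c hmem))
    · have hxt : x ∈ t := (List.mem_cons.1 hx).resolve_left hxa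
      match t, hpw with
      | c :: t2, hpw =>
        by_cases hxc : x = c
        · subst hxc
          cases hl with
          | down hac hval hrest =>
            -- b = false, g x < g a
            match t2, hrest with
            | [], _ =>
              refine ⟨[a], (List.nil_sublist _).cons₂ a, by simp [fun h : x = a => hxa h], Alt.single _ _,
                by simp, Or.inr (Or.inr ⟨a, a, rfl, rfl, by simp⟩)⟩
            | d :: t3, hrest =>
              cases hrest with
              | up hcd hval2 hrest2 =>
                have hxnt3 : x ∉ t3 := by
                  intro hmem
                  exact lt_irrefl x (List.rel_of_pairwise_cons (List.pairwise_cons.1 hpw).2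
                    (List.mem_cons_of_mem d hmem))
                by_cases hda : g d ≤ g a
                · -- keep a, drop x=c and d
                  have halt : Alt g false (a :: t3) := by
                    match t3, hrest2 with
                    | [], _ => exact Alt.single _ _
                    | e :: t4, hrest2 =>
                      cases hrest2 with
                      | down hde hval3 hrest3 =>
                        exact Alt.down (List.rel_of_pairwise_cons hpw (by simp))
                          (lt_of_lt_of_le hval3 hda) hrest3
                  refine ⟨a :: t3, (((List.sublist_cons_self d t3).cons x).cons₂ a), ?_, halt,
                    by simp, Or.inr (Or.inr ⟨a, a, rfl, rfl, by simp⟩)⟩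
                  simp only [List.mem_cons, not_or]
                  exact ⟨hxa, hxnt3⟩
                · -- drop a and x=c
                  refine ⟨d :: t3, ((List.sublist_cons_self x (d :: t3)).cons a), ?_, hrest2,
                    by simp, Or.inr (Or.inr ⟨a, d, rfl, rfl, by simpa using le_of_lt (not_le.mp hda)⟩)⟩
                  simp only [List.mem_cons, not_or]
                  exact ⟨ne_of_lt hcd, hxnt3⟩
          | up hac hval hrest =>
            -- b = true, g a < g x
            match t2, hrest with
            | [], _ =>
              refine ⟨[a], (List.nil_sublist _).cons₂ a, by simp [fun h : x = a => hxa h], Alt.single _ _,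
                by simp, Or.inr (Or.inr ⟨a, a, rfl, rfl, by simp⟩)⟩
            | d :: t3, hrest =>
              cases hrest with
              | down hcd hval2 hrest2 =>
                have hxnt3 : x ∉ t3 := by
                  intro hmem
                  exact lt_irrefl x (List.rel_of_pairwise_cons (List.pairwise_cons.1 hpw).2
                    (List.mem_cons_of_mem d hmem))
                by_cases had : g a ≤ g d
                · have halt : Alt g true (a :: t3) := by
                    match t3, hrest2 with
                    | [], _ => exact Alt.single _ _
                    | e :: t4, hrest2 =>
                      cases hrest2 with
                      | up hde hval3 hrest3 =>
                        exact Alt.up (List.rel_of_pairwise_cons hpw (by simp))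
                          (lt_of_le_of_lt had hval3) hrest3
                  refine ⟨a :: t3, (((List.sublist_cons_self d t3).cons x).cons₂ a), ?_, halt,
                    by simp, Or.inr (Or.inr ⟨a, a, rfl, rfl, by simp⟩)⟩
                  simp only [List.mem_cons, not_or]
                  exact ⟨hxa, hxnt3⟩
                · refine ⟨d :: t3, ((List.sublist_cons_self x (d :: t3)).cons a), ?_, hrest2,
                    by simp, Or.inr (Or.inr ⟨a, d, rfl, rfl, by simpa using le_of_lt (not_le.mp had)⟩)⟩
                  simp only [List.mem_cons, not_or]
                  exact ⟨ne_of_lt hcd, hxnt3⟩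
        · -- x ∈ t2
          obtain ⟨l₂, hsub₂, hxn₂, halt₂, hlen₂, hhead₂⟩ := ih (!b) hl.tail x hxt
          have hhead₂' := hhead₂.resolve_left (by simp; exact fun h => hxc h.symm)
          rcases hhead₂' with h2nil | ⟨h, h', hh, hh', hcond⟩
          · subst h2nil
            refine ⟨[a], (List.nil_sublist _).cons₂ a, by simp [fun h : x = a => hxa h],
              Alt.single _ _, ?_, Or.inr (Or.inr ⟨a, a, rfl, rfl, by simp⟩)⟩
            simp only [List.length_cons] at hlen₂ ⊢
            omega
          · have hhc : c = h := by simpa using hh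
            subst hhc
            match l₂, hh', hxn₂, hsub₂, halt₂, hlen₂ with
            | h2 :: l₂t, hh', hxn₂, hsub₂, halt₂, hlen₂ =>
              have hh2 : h2 = h' := by simpa using hh'
              subst hh2
              have hah' : a < h2 := List.rel_of_pairwise_cons hpw (hsub₂.mem (by simp))
              have halt : Alt g b (a :: h2 :: l₂t) := by
                cases hl with
                | down hac hval hrest =>
                  refine Alt.down hah' ?_ halt₂
                  have : g h2 ≤ g c := by simpa using hcond
                  exact lt_of_le_of_lt this hval
                | up hac hval hrest =>
                  refine Alt.up hah' ?_ halt₂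
                  have : g c ≤ g h2 := by simpa using hcond
                  exact lt_of_lt_of_le hval this
              refine ⟨a :: h2 :: l₂t, hsub₂.cons₂ a, ?_, halt, ?_,
                Or.inr (Or.inr ⟨a, a, rfl, rfl, by simp⟩)⟩
              · simp only [List.mem_cons, not_or]
                exact ⟨hxa, by simpa using hxn₂⟩
              · simp only [List.length_cons] at hlen₂ ⊢
                omega
def StepCond (g : X → ℝ) (b : Bool) (l : List X) : Prop :=
  ∀ (i : ℕ) (h : i + 1 < l.length),
    ((Even i ↔ b = false) → g (l.get ⟨i+1, h⟩) < g (l.get ⟨i, Nat.lt_of_succ_lt h⟩)) ∧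
    ((Even i ↔ b = true) → g (l.get ⟨i, Nat.lt_of_succ_lt h⟩) < g (l.get ⟨i+1, h⟩))

theorem Alt.step {g : X → ℝ} {b : Bool} {l : List X} (h : Alt g b l) : StepCond g b l := by
  induction h with
  | nil => intro i hi; simp at hi
  | single => intro i hi; simp at hi
  | @down x y t h1 h2 h3 ih =>
    intro i hi
    match i with
    | 0 => simpa using h2
    | (j+1) =>
      have hj : j + 1 < (y :: t).length := by simpa using hi
      have := ih j hj
      have hpar : Even (j+1) ↔ ¬ Even j := Nat.even_add_one
      simp only [List.get] at this ⊢
      constructor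
      · intro hev
        have hje : ¬ Even j := hpar.mp (hev.mpr (by simp))
        exact this.1 (by simpa using hje)
      · intro hev
        have hje : Even j := by
          by_contra hcon
          have := hev.mp (hpar.mpr hcon)
          simp at this
        exact this.2 (by simpa using hje)
  | @up x y t h1 h2 h3 ih =>
    intro i hi
    match i with
    | 0 => simpa using h2
    | (j+1) =>
      have hj : j + 1 < (y :: t).length := by simpa using hi
      have := ih j hj
      have hpar : Even (j+1) ↔ ¬ Even j := Nat.even_add_one
      simp only [List.get] at this ⊢
      constructor
      · intro hev
        have hje : Even j := by
          by_contra hcon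
          have := hev.mp (hpar.mpr hcon)
          simp at this
        exact this.1 (by simpa using hje)
      · intro hev
        have hje : ¬ Even j := fun hcon => hpar.mp (hev.mpr (by simp)) hcon
        exact this.2 (by simpa using hje)

theorem alt_of_step {g : X → ℝ} : ∀ (l : List X) (b : Bool), l.Pairwise (· < ·) →
    StepCond g b l → Alt g b l := by
  intro l
  induction l with
  | nil => intro b _ _; exact Alt.nil _
  | cons a t ih =>
    intro b hp hs
    match t with
    | [] => exact Alt.single _ _
    | c :: t' =>
      have hac : a < c := (List.pairwise_cons.1 hp).1 c (by simp)
      have h0 := hs 0 (by simp)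
      have hrec : StepCond g (!b) (c :: t') := by
        intro i hi
        have hi' : i + 1 + 1 < (a :: c :: t').length := by simpa using Nat.succ_lt_succ hi
        have := hs (i+1) hi'
        have hpar : Even (i+1) ↔ ¬ Even i := Nat.even_add_one
        simp only [List.get] at this ⊢
        constructor
        · intro hev
          refine this.1 ?_
          cases b with
          | false =>
            simp only [Bool.not_false] at hev
            have : ¬ Even i := fun h => absurd (hev.mp h) (by simp)
            simpa [hpar] using this
          | true =>
            simp only [Bool.not_true] at hev
            have : Even i := hev.mpr (by simp)
            simp [hpar, this]
        · intro hev
          refine this.2 ?_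
          cases b with
          | false =>
            simp only [Bool.not_false] at hev
            have : Even i := hev.mpr (by simp)
            simp [hpar, this]
          | true =>
            simp only [Bool.not_true] at hev
            have : ¬ Even i := fun h => absurd (hev.mp h) (by simp)
            simpa [hpar] using this
      have halt := ih (!b) (List.pairwise_cons.1 hp).2 hrec
      cases b with
      | false => exact Alt.down hac (by simpa using h0.1 (by simp)) halt
      | true => exact Alt.up hac (by simpa using h0.2 (by simp)) halt

theorem Alt.congr {f g : X → ℝ} {b : Bool} {l : List X} (h : Alt f b l)
    (hfg : ∀ y ∈ l, f y = g y) : Alt g b l := by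
  induction h with
  | nil => exact Alt.nil _
  | single => exact Alt.single _ _
  | @down x y l h1 h2 h3 ih =>
    refine Alt.down h1 ?_ (ih fun z hz => hfg z (List.mem_cons_of_mem _ hz))
    rw [← hfg x (by simp), ← hfg y (by simp)]; exact h2
  | @up x y l h1 h2 h3 ih =>
    refine Alt.up h1 ?_ (ih fun z hz => hfg z (List.mem_cons_of_mem _ hz))
    rw [← hfg x (by simp), ← hfg y (by simp)]; exact h2

theorem exists_good (f g : X → ℝ) : ∀ (n : ℕ) (l : List X), Alt f false l →
    (l.countP fun y => decide (f y ≠ g y)) ≤ n →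
    ∃ l', l'.Sublist l ∧ Alt g false l' ∧ l.length ≤ l'.length + 2 * n := by
  intro n
  induction n with
  | zero =>
    intro l hl hc
    refine ⟨l, List.Sublist.refl l, hl.congr ?_, by simp⟩
    intro y hy
    have := List.countP_eq_zero.mp (Nat.le_zero.mp hc) y hy
    simpa using this
  | succ n ihn =>
    intro l hl hc
    by_cases h0 : (l.countP fun y => decide (f y ≠ g y)) = 0
    · refine ⟨l, List.Sublist.refl l, hl.congr ?_, by omega⟩
      intro y hy
      have := List.countP_eq_zero.mp h0 y hy
      simpa using this
    · obtain ⟨x, hx, hpx⟩ := List.countP_pos_iff.mp (Nat.pos_of_ne_zero h0)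
      obtain ⟨l₁, hsub, hxn, halt₁, hlen₁, -⟩ := Alt.remove l false hl x hx
      have hcnt : (l₁.countP fun y => decide (f y ≠ g y)) ≤ n := by
        set p : X → Bool := fun y => decide (f y ≠ g y) with hp
        have hfsub : (l₁.filter p).Sublist (l.filter p) := hsub.filter p
        have hxmem : x ∈ l.filter p := List.mem_filter.2 ⟨hx, hpx⟩
        have hne : (l₁.filter p).length ≠ (l.filter p).length := by
          intro he
          exact hxn (List.mem_of_mem_filter (hfsub.eq_of_length he ▸ hxmem))
        have hlt : (l₁.filter p).length < (l.filter p).length :=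
          lt_of_le_of_ne hfsub.length_le hne
        rw [List.countP_eq_length_filter] at hc ⊢
        omega
      obtain ⟨l', hsub', halt', hlen'⟩ := ihn l₁ halt₁ hcnt
      exact ⟨l', hsub'.trans hsub, halt', by omega⟩

theorem chain_bound (f g : X → ℝ) (k : ℕ) (hg : KMonotone k g) (l : List X)
    (hl : Alt f false l) :
    l.length ≤ k + 2 * (l.countP fun y => decide (f y ≠ g y)) := by
  obtain ⟨l', hsub, halt, hlen⟩ := exists_good f g _ l hl le_rfl
  have hk : l'.length ≤ k := by
    by_contra hcon
    push_neg at hcon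
    apply hg
    have hlen' : k + 1 ≤ l'.length := hcon
    refine ⟨fun i : Fin (k+1) => l'.get ⟨(i : ℕ), lt_of_lt_of_le i.isLt hlen'⟩, ?_, ?_⟩
    · intro i j hij
      exact List.pairwise_iff_get.mp halt.pairwise _ _ hij
    · intro i h
      have hstep := halt.step (i : ℕ) (by omega)
      constructor
      · intro hev
        exact hstep.1 (iff_of_true hev rfl)
      · intro hodd
        exact hstep.2 (iff_of_false (Nat.not_even_iff_odd.mpr hodd) (by simp))
  omega

theorem alt_ofFn {f : X → ℝ} {m : ℕ} (c : Fin m → X) (hc : AltChain f c) :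
    Alt f false (List.ofFn c) := by
  apply alt_of_step
  · refine List.pairwise_iff_get.mpr ?_
    intro i j hij
    simp only [List.get_ofFn]
    refine hc.1 ?_
    rw [Fin.lt_def, Fin.coe_cast, Fin.coe_cast]
    exact Fin.lt_def.mp hij
  · intro i h
    have hm : i + 1 < m := by simpa using h
    have hstep := hc.2 ⟨i, by omega⟩ hm
    have hget : ∀ (j : ℕ) (hj : j < (List.ofFn c).length) (hj' : j < m),
        (List.ofFn c).get ⟨j, hj⟩ = c ⟨j, hj'⟩ := by
      intro j hj hj'
      rw [List.get_ofFn]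
      congr 1
    constructor
    · intro hev
      have hev' : Even i := hev.mpr rfl
      have h2 := hstep.1 hev'
      rw [hget (i+1) h hm, hget i (Nat.lt_of_succ_lt h) (by omega)]
      exact h2
    · intro hev
      have hodd : Odd i := by
        rw [← Nat.not_even_iff_odd]
        intro hcon
        simpa using hev.mp hcon
      have h2 := hstep.2 hodd
      rw [hget (i+1) h hm, hget i (Nat.lt_of_succ_lt h) (by omega)]
      exact h2

end AltL

theorem stmt7 {X : Type*} [PartialOrder X] [Fintype X] [DecidableEq X]
    (f : X → ℝ) (k k' : ℕ) (hk : 1 ≤ k) (hk' : 3 * k ≤ k')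
    (𝒞 : Finset (Fin k' → X))
    (hchain : ∀ c ∈ 𝒞, AltChain f c)
    (hdisj : ∀ c ∈ 𝒞, ∀ c' ∈ 𝒞, c ≠ c' → ∀ i j, c i ≠ c' j)
    (g : X → ℝ) (hg : KMonotone k g) :
    ((𝒞.biUnion fun c => Finset.image c Finset.univ).card : ℝ) / (3 * Fintype.card X) ≤
      ((Finset.univ.filter fun x => f x ≠ g x).card : ℝ) / Fintype.card X := by
  classical
  set D : Finset X := Finset.univ.filter fun x => f x ≠ g x with hD
  set U : Finset X := 𝒞.biUnion fun c => Finset.image c Finset.univ with hU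
  -- per-chain bound
  have key : ∀ c ∈ 𝒞, k' ≤ 3 * (Finset.univ.filter fun i => f (c i) ≠ g (c i)).card := by
    intro c hc
    have h1 : Alt f false (List.ofFn c) := alt_ofFn c (hchain c hc)
    have h2 := chain_bound f g k hg (List.ofFn c) h1
    have h3 : ((List.ofFn c).countP fun y => decide (f y ≠ g y)) =
        (Finset.univ.filter fun i => f (c i) ≠ g (c i)).card := by
      rw [List.ofFn_eq_map, List.countP_map]
      simp [Finset.filter, Fin.univ_def, List.countP_eq_length_filter, Function.comp_def]
    rw [List.length_ofFn, h3] at h2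
    omega
  have hinj : ∀ c ∈ 𝒞, Function.Injective c := fun c hc => (hchain c hc).1.injective
  -- disjointness of images
  have himdisj : ∀ c ∈ 𝒞, ∀ c' ∈ 𝒞, c ≠ c' →
      Disjoint (Finset.image c Finset.univ) (Finset.image c' Finset.univ) := by
    intro c hc c' hc' hne
    rw [Finset.disjoint_left]
    intro x hx hx'
    obtain ⟨i, -, rfl⟩ := Finset.mem_image.1 hx
    obtain ⟨j, -, hj⟩ := Finset.mem_image.1 hx'
    exact hdisj c hc c' hc' hne i j hj.symm
  -- bad sets
  set B : (Fin k' → X) → Finset X :=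
    fun c => Finset.image c (Finset.univ.filter fun i => f (c i) ≠ g (c i)) with hB
  have hBsub : ∀ c, B c ⊆ Finset.image c Finset.univ := by
    intro c
    exact Finset.image_subset_image (Finset.filter_subset _ _)
  have hBdisj : ∀ c ∈ 𝒞, ∀ c' ∈ 𝒞, c ≠ c' → Disjoint (B c) (B c') := by
    intro c hc c' hc' hne
    exact Finset.disjoint_of_subset_left (hBsub c)
      (Finset.disjoint_of_subset_right (hBsub c') (himdisj c hc c' hc' hne))
  have hBD : (𝒞.biUnion B) ⊆ D := by
    intro x hx
    obtain ⟨c, hc, hxc⟩ := Finset.mem_biUnion.1 hx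
    obtain ⟨i, hi, rfl⟩ := Finset.mem_image.1 hxc
    simp only [hD, Finset.mem_filter, Finset.mem_univ, true_and]
    exact (Finset.mem_filter.1 hi).2
  have hBcard : ∀ c ∈ 𝒞, (B c).card = (Finset.univ.filter fun i => f (c i) ≠ g (c i)).card := by
    intro c hc
    exact Finset.card_image_of_injective _ (hinj c hc)
  have hUcard : U.card = ∑ c ∈ 𝒞, (Finset.image c Finset.univ).card :=
    Finset.card_biUnion himdisj
  have hBsum : ∑ c ∈ 𝒞, (B c).card = (𝒞.biUnion B).card := (Finset.card_biUnion hBdisj).symm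
  have hmain : U.card ≤ 3 * D.card := by
    calc U.card = ∑ c ∈ 𝒞, (Finset.image c Finset.univ).card := hUcard
    _ ≤ ∑ c ∈ 𝒞, 3 * (B c).card := by
        refine Finset.sum_le_sum ?_
        intro c hc
        rw [Finset.card_image_of_injective _ (hinj c hc), Finset.card_univ,
          Fintype.card_fin, hBcard c hc]
        exact key c hc
    _ = 3 * ∑ c ∈ 𝒞, (B c).card := by rw [Finset.mul_sum]
    _ = 3 * (𝒞.biUnion B).card := by rw [hBsum]
    _ ≤ 3 * D.card := by
        have := Finset.card_le_card hBD
        omega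
  -- conclude
  rcases Nat.eq_zero_or_pos (Fintype.card X) with h0 | hpos
  · have : U.card = 0 := by
      have := Finset.card_le_card (Finset.subset_univ U)
      rw [Finset.card_univ, h0] at this
      omega
    simp [this, h0]
  · have hNpos : (0 : ℝ) < Fintype.card X := by exact_mod_cast hpos
    rw [div_le_div_iff₀ (by positivity) hNpos]
    have hcast : (U.card : ℝ) ≤ 3 * D.card := by exact_mod_cast hmain
    nlinarith [hcast, hNpos, (Nat.cast_nonneg D.card : (0:ℝ) ≤ D.card)]
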